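/- For any integer n ≥ 9, if p is the largest prime such that p² ≤ n, then the integer quotient n / p² equals 1 or 2. -/

import Mathlib

open Nat Finset

namespace EB

/-- `a % q = a - m * q` when `m*q ≤ a < (m+1)*q`. -/
lemma mod_eq_sub (a q m : ℕ) (h1 : m * q ≤ a) (h2 : a < (m+1) * q) :
    a % q = a - m * q := by
  have e : (m+1) * q = m * q + q := by ring
  have h : a = (a - m * q) + m * q := by omega
  rw [h, Nat.add_mul_mod_self_right, Nat.mod_eq_of_lt (by omega)]
  omega

/-- Kummer-style: no carry at any digit implies zero multiplicity. -/
lemma Zlemma {q N k : ℕ} (hq : q.Prime) (hkN : k ≤ N) (hNq : N < q ^ 2)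
    (hcar : k % q + (N - k) % q < q) : (Nat.choose N k).factorization q = 0 := by
  rw [Nat.factorization_def _ hq, @padicValNat_def _ ⟨hq⟩ _ (Nat.choose_pos hkN).ne',
    ← emultiplicity_eq_zero_iff_multiplicity_eq_zero]
  simp only [hq.emultiplicity_choose hkN (lt_add_one _), Nat.cast_eq_zero,
    Finset.card_eq_zero, Finset.filter_eq_empty_iff, not_le]
  intro i hi
  rw [Finset.mem_Ico] at hi
  rcases eq_or_lt_of_le hi.1 with rfl | hi2
  · simpa using hcar
  · have h2i : q ^ 2 ≤ q ^ i := Nat.pow_le_pow_right hq.one_lt.le hi2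
    calc k % q ^ i + (N - k) % q ^ i ≤ k + (N - k) :=
          Nat.add_le_add (Nat.mod_le _ _) (Nat.mod_le _ _)
      _ = N := by omega
      _ < q ^ 2 := hNq
      _ ≤ q ^ i := h2i

/-- Carry at the first digit implies `q` divides the binomial coefficient. -/
lemma Plemma {q N k : ℕ} (hq : q.Prime) (hkN : k ≤ N) (hqN : q ≤ N)
    (hcar : q ≤ k % q + (N - k) % q) : q ∣ Nat.choose N k := by
  rw [hq.dvd_iff_one_le_factorization (Nat.choose_pos hkN).ne']
  rw [Nat.factorization_def _ hq, @padicValNat_def _ ⟨hq⟩ _ (Nat.choose_pos hkN).ne']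
  rw [← Nat.cast_le (α := ℕ∞), ← FiniteMultiplicity.emultiplicity_eq_multiplicity
    (Nat.finiteMultiplicity_iff.2 ⟨hq.ne_one, Nat.choose_pos hkN⟩)]
  rw [hq.emultiplicity_choose hkN (lt_add_one _)]
  rw [Nat.cast_le]
  refine Finset.card_pos.2 ⟨1, Finset.mem_filter.2 ⟨Finset.mem_Ico.2 ⟨le_refl 1, ?_⟩, ?_⟩⟩
  · have : 0 < Nat.log q N := Nat.log_pos hq.one_lt hqN
    omega
  · simpa using hcar

lemma chooseId (n : ℕ) :
    Nat.choose (3*n+3) (n+1) * ((n+1)*((2*n+1)*(2*n+2)))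
      = Nat.choose (3*n) n * ((3*n+1)*((3*n+2)*(3*n+3))) := by
  have h1 := Nat.choose_mul_factorial_mul_factorial (show n ≤ 3*n by omega)
  have h2 := Nat.choose_mul_factorial_mul_factorial (show n+1 ≤ 3*n+3 by omega)
  rw [show 3*n+3 - (n+1) = 2*n+2 by omega] at h2
  rw [show 3*n - n = 2*n by omega] at h1
  have f1 : Nat.factorial (n+1) = (n+1) * Nat.factorial n := Nat.factorial_succ n
  have f2 : Nat.factorial (2*n+2) = (2*n+2) * ((2*n+1) * Nat.factorial (2*n)) := by
    rw [show 2*n+2 = (2*n+1)+1 by ring, Nat.factorial_succ, Nat.factorial_succ]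
  have f3 : Nat.factorial (3*n+3) = (3*n+3) * ((3*n+2) * ((3*n+1) * Nat.factorial (3*n))) := by
    rw [show 3*n+3 = (3*n+2)+1 by ring, Nat.factorial_succ,
      show 3*n+2 = (3*n+1)+1 by ring, Nat.factorial_succ, Nat.factorial_succ]
  have h4 : Nat.choose (3*n+3) (n+1) * ((n+1)*((2*n+1)*(2*n+2))) * (Nat.factorial n * Nat.factorial (2*n))
      = Nat.choose (3*n) n * ((3*n+1)*((3*n+2)*(3*n+3))) * (Nat.factorial n * Nat.factorial (2*n)) := by
    calc Nat.choose (3*n+3) (n+1) * ((n+1)*((2*n+1)*(2*n+2))) * (Nat.factorial n * Nat.factorial (2*n))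
        = Nat.choose (3*n+3) (n+1) * ((n+1) * Nat.factorial n) * ((2*n+2) * ((2*n+1) * Nat.factorial (2*n))) := by ring
      _ = Nat.choose (3*n+3) (n+1) * Nat.factorial (n+1) * Nat.factorial (2*n+2) := by rw [f1, f2]
      _ = Nat.factorial (3*n+3) := h2
      _ = (3*n+3) * ((3*n+2) * ((3*n+1) * Nat.factorial (3*n))) := f3
      _ = (3*n+3) * ((3*n+2) * ((3*n+1) * (Nat.choose (3*n) n * Nat.factorial n * Nat.factorial (2*n)))) := by rw [h1]
      _ = Nat.choose (3*n) n * ((3*n+1)*((3*n+2)*(3*n+3))) * (Nat.factorial n * Nat.factorial (2*n)) := by ring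
  exact Nat.eq_of_mul_eq_mul_right (by positivity) h4

lemma chooseId2 (k : ℕ) :
    Nat.choose (3*k+1) k * (2*k+1) = Nat.choose (3*k) k * (3*k+1) := by
  have h1 := Nat.choose_mul_factorial_mul_factorial (show k ≤ 3*k by omega)
  have h2 := Nat.choose_mul_factorial_mul_factorial (show k ≤ 3*k+1 by omega)
  rw [show 3*k+1 - k = 2*k+1 by omega] at h2
  rw [show 3*k - k = 2*k by omega] at h1
  have f2 : Nat.factorial (2*k+1) = (2*k+1) * Nat.factorial (2*k) := Nat.factorial_succ _
  have f3 : Nat.factorial (3*k+1) = (3*k+1) * Nat.factorial (3*k) := Nat.factorial_succ _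
  have h4 : Nat.choose (3*k+1) k * (2*k+1) * (Nat.factorial k * Nat.factorial (2*k))
      = Nat.choose (3*k) k * (3*k+1) * (Nat.factorial k * Nat.factorial (2*k)) := by
    calc Nat.choose (3*k+1) k * (2*k+1) * (Nat.factorial k * Nat.factorial (2*k))
        = Nat.choose (3*k+1) k * Nat.factorial k * ((2*k+1) * Nat.factorial (2*k)) := by ring
      _ = Nat.choose (3*k+1) k * Nat.factorial k * Nat.factorial (2*k+1) := by rw [f2]
      _ = Nat.factorial (3*k+1) := h2
      _ = (3*k+1) * Nat.factorial (3*k) := f3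
      _ = (3*k+1) * (Nat.choose (3*k) k * Nat.factorial k * Nat.factorial (2*k)) := by rw [h1]
      _ = Nat.choose (3*k) k * (3*k+1) * (Nat.factorial k * Nat.factorial (2*k)) := by ring
  exact Nat.eq_of_mul_eq_mul_right (by positivity) h4

lemma lemA : ∀ n : ℕ, 27^n ≤ 4^n * ((3*n+1) * Nat.choose (3*n) n) := by
  intro n
  induction n with
  | zero => simp
  | succ n ih =>
    have hid := chooseId n
    have hD : 0 < (n+1)*((2*n+1)*(2*n+2)) := by positivity
    rw [show 3*(n+1) = 3*n+3 by ring, show 3*n+3+1 = 3*n+4 by ring]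
    refine Nat.le_of_mul_le_mul_right ?_ hD
    calc 27^(n+1) * ((n+1)*((2*n+1)*(2*n+2)))
        = 27^n * (27*((n+1)*((2*n+1)*(2*n+2)))) := by ring
      _ ≤ (4^n * ((3*n+1) * Nat.choose (3*n) n)) * (27*((n+1)*((2*n+1)*(2*n+2)))) :=
          Nat.mul_le_mul_right _ ih
      _ ≤ (4^n * ((3*n+1) * Nat.choose (3*n) n)) * (4*((3*n+4)*((3*n+2)*(3*n+3)))) :=
          Nat.mul_le_mul_left _ (by nlinarith)
      _ = (4^(n+1) * (3*n+4)) * (Nat.choose (3*n) n * ((3*n+1)*((3*n+2)*(3*n+3)))) := by ring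
      _ = (4^(n+1) * (3*n+4)) * (Nat.choose (3*n+3) (n+1) * ((n+1)*((2*n+1)*(2*n+2)))) := by
          rw [hid]
      _ = 4^(n+1) * ((3*n+4) * Nat.choose (3*n+3) (n+1)) * ((n+1)*((2*n+1)*(2*n+2))) := by ring

lemma lemB : ∀ k : ℕ, Nat.choose (3*k) k * 4^k ≤ 27^k := by
  intro k
  induction k with
  | zero => simp
  | succ n ih =>
    have hid := chooseId n
    have hD : 0 < (n+1)*((2*n+1)*(2*n+2)) := by positivity
    rw [show 3*(n+1) = 3*n+3 by ring]
    refine Nat.le_of_mul_le_mul_right ?_ hD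
    calc Nat.choose (3*n+3) (n+1) * 4^(n+1) * ((n+1)*((2*n+1)*(2*n+2)))
        = (Nat.choose (3*n+3) (n+1) * ((n+1)*((2*n+1)*(2*n+2)))) * 4^(n+1) := by ring
      _ = (Nat.choose (3*n) n * ((3*n+1)*((3*n+2)*(3*n+3)))) * 4^(n+1) := by rw [hid]
      _ = (Nat.choose (3*n) n * 4^n) * (4*((3*n+1)*((3*n+2)*(3*n+3)))) := by ring
      _ ≤ 27^n * (4*((3*n+1)*((3*n+2)*(3*n+3)))) := Nat.mul_le_mul_right _ ih
      _ ≤ 27^n * (27*((n+1)*((2*n+1)*(2*n+2)))) := Nat.mul_le_mul_left _ (by nlinarith)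
      _ = 27^(n+1) * ((n+1)*((2*n+1)*(2*n+2))) := by ring

lemma lemB1 (k : ℕ) : Nat.choose (3*k+1) k * 4^k ≤ 2 * 27^k := by
  have hid := chooseId2 k
  refine Nat.le_of_mul_le_mul_right ?_ (show 0 < 2*k+1 by omega)
  calc Nat.choose (3*k+1) k * 4^k * (2*k+1)
      = (Nat.choose (3*k+1) k * (2*k+1)) * 4^k := by ring
    _ = (Nat.choose (3*k) k * (3*k+1)) * 4^k := by rw [hid]
    _ = (Nat.choose (3*k) k * 4^k) * (3*k+1) := by ring
    _ ≤ 27^k * (3*k+1) := Nat.mul_le_mul_right _ (lemB k)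
    _ ≤ 27^k * (2*(2*k+1)) := Nat.mul_le_mul_left _ (by omega)
    _ = 2 * 27^k * (2*k+1) := by ring

lemma Bbound (n : ℕ) : Nat.choose (n + n/2) (n/2) * 4^(n/2) ≤ 2 * 27^(n/2) := by
  rcases Nat.even_or_odd n with ⟨k, hk⟩ | ⟨k, hk⟩
  · subst hk
    rw [show k + k + (k+k)/2 = 3*k by omega, show (k+k)/2 = k by omega]
    exact (lemB k).trans (by omega)
  · subst hk
    rw [show 2*k+1 + (2*k+1)/2 = 3*k+1 by omega, show (2*k+1)/2 = k by omega]
    exact lemB1 k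

lemma pow4_le : ∀ u : ℕ, 20 ≤ u → u^4 ≤ 2^(u-1) := by
  intro u hu
  induction u with
  | zero => omega
  | succ v ih =>
    rcases Nat.lt_or_ge v 20 with h | h
    · have hv19 : v = 19 := by omega
      subst hv19
      norm_num
    · have hv := ih (by omega)
      have a1 : 20 * (v*(v*v)) ≤ v*(v*(v*v)) := Nat.mul_le_mul_right _ h
      have a2 : 20 * (v*v) ≤ v*(v*v) := Nat.mul_le_mul_right _ h
      have a3 : 20 * v ≤ v*v := Nat.mul_le_mul_right _ h
      have h1 : (v+1)^4 ≤ 2 * v^4 := by nlinarith [a1, a2, a3, h]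
      calc (v+1)^4 ≤ 2 * v^4 := h1
        _ ≤ 2 * 2^(v-1) := Nat.mul_le_mul_left _ hv
        _ = 2^(v-1+1) := by rw [pow_succ]; ring
        _ = 2^(v+1-1) := by congr 1; omega

lemma core (n : ℕ) (hn : 100000 ≤ n) :
    2*(3*n+1)*(3*n)^(Nat.sqrt (3*n)) * 4^(n + 3*n/5) < 27^(n - n/2) * 4^(n/2) := by
  set s := Nat.sqrt (3*n) with hsdef
  set u := Nat.log 2 (3*n) + 1 with hudef
  have hlt : 3*n < 2^u := Nat.lt_pow_succ_log_self (by norm_num) _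
  have hpow : 2^(u-1) ≤ 3*n := by
    have h := Nat.pow_log_le_self 2 (show 3*n ≠ 0 by omega)
    have : u - 1 = Nat.log 2 (3*n) := by omega
    rwa [this]
  have hs2 : s*s ≤ 3*n := Nat.sqrt_le (3*n)
  have hsn : 2*s + 1 ≤ n := by nlinarith
  have hsq4 : (s+1)*(s+1) ≤ 4*n := by nlinarith
  have key : 120*(u*s+u) + 5160 ≤ 19*n := by
    rcases le_or_gt u 19 with h19 | h19
    · have h1 : 120*(u*s+u) ≤ 2280*(s+1) := by nlinarith
      have h2 : 2280*(s+1) + 5160 ≤ 19*n := by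
        have h3 : (2280*(s+1))^2 ≤ 5198400*(4*n) := by nlinarith
        obtain ⟨t, ht⟩ : ∃ t, 19*n = t + 5160 := ⟨19*n - 5160, by omega⟩
        have h4 : 5198400*(4*n) ≤ t^2 := by nlinarith
        have h5 : (2280*(s+1))^2 ≤ t^2 := le_trans h3 h4
        have h6 : 2280*(s+1) ≤ t := (Nat.pow_le_pow_iff_left (by norm_num)).1 h5
        omega
      linarith
    · have h20 : u^4 ≤ 2^(u-1) := pow4_le u (by omega)
      have hu4 : u^4 ≤ 3*n := h20.trans hpow
      have h1 : (120*(u*(s+1)))^4 ≤ 207360000*((3*n)*((4*n)*(4*n))) := by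
        have e1 : (120*(u*(s+1)))^4 = 207360000*(u^4*(((s+1)*(s+1))*((s+1)*(s+1)))) := by ring
        rw [e1]
        exact Nat.mul_le_mul_left _ (Nat.mul_le_mul hu4 (Nat.mul_le_mul hsq4 hsq4))
      have h2 : (120*(u*(s+1)))^4 ≤ (18*n)^4 := by
        calc (120*(u*(s+1)))^4 ≤ 207360000*((3*n)*((4*n)*(4*n))) := h1
          _ = 9953280000*(n*(n*n)) := by ring
          _ ≤ (104976*n)*(n*(n*n)) := Nat.mul_le_mul_right _ (by omega)
          _ = (18*n)^4 := by ring
      have h3 : 120*(u*(s+1)) ≤ 18*n := (Nat.pow_le_pow_iff_left (by norm_num)).1 h2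
      have e2 : u*(s+1) = u*s+u := by ring
      rw [e2] at h3
      linarith
  have hE : 2*(3*n+1)*(3*n)^s * 4^(n + 3*n/5) ≤ 2^(u*s + u + 2 + (2*n + 2*(3*n/5))) := by
    have b1 : 2*(3*n+1) ≤ 2^(u+2) := by
      calc 2*(3*n+1) ≤ 4*(3*n) := by omega
        _ ≤ 4*2^u := Nat.mul_le_mul_left _ hlt.le
        _ = 2^(u+2) := by rw [pow_add]; ring
    have b2 : (3*n)^s ≤ 2^(u*s) := by
      calc (3*n)^s ≤ (2^u)^s := Nat.pow_le_pow_left hlt.le s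
        _ = 2^(u*s) := by rw [← pow_mul]
    have b3 : 4^(n + 3*n/5) = 2^(2*n + 2*(3*n/5)) := by
      rw [show (4:ℕ) = 2^2 by norm_num, ← pow_mul]
      congr 1
      ring
    calc 2*(3*n+1)*(3*n)^s * 4^(n+3*n/5) ≤ 2^(u+2) * 2^(u*s) * 2^(2*n + 2*(3*n/5)) :=
          Nat.mul_le_mul (Nat.mul_le_mul b1 b2) (le_of_eq b3)
      _ = 2^(u*s + u + 2 + (2*n + 2*(3*n/5))) := by rw [← pow_add, ← pow_add]; congr 1; ring
  have hF : 2^(u*s + u + 2 + (2*n + 2*(3*n/5))) < 27^(n - n/2) * 4^(n/2) := by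
    have hEle : u*s + u + 2 + (2*n + 2*(3*n/5)) + 1
        ≤ 22*(n/10) + 19*((n/10)/12) + 2*(n/2) := by
      obtain ⟨P, hP⟩ : ∃ P, P = u*s + u := ⟨u*s+u, rfl⟩
      have key' : 120*P + 5160 ≤ 19*n := by rw [hP]; exact key
      rw [show u*s + u + 2 + (2*n + 2*(3*n/5)) + 1 = P + 3 + (2*n + 2*(3*n/5)) by omega]
      omega
    calc 2^(u*s + u + 2 + (2*n + 2*(3*n/5)))
        < 2^(u*s + u + 2 + (2*n + 2*(3*n/5)) + 1) := by
          exact Nat.pow_lt_pow_right (by norm_num) (by omega)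
      _ ≤ 2^(22*(n/10) + 19*((n/10)/12) + 2*(n/2)) := Nat.pow_le_pow_right (by norm_num) hEle
      _ = 2^(22*(n/10)) * 2^(19*((n/10)/12)) * 2^(2*(n/2)) := by rw [← pow_add, ← pow_add]
      _ ≤ 2^(22*(n/10)) * 3^(n/10) * 2^(2*(n/2)) := by
          refine Nat.mul_le_mul_right _ (Nat.mul_le_mul_left _ ?_)
          calc 2^(19*((n/10)/12)) = (2^19)^((n/10)/12) := by rw [← pow_mul]
            _ ≤ (3^12)^((n/10)/12) := Nat.pow_le_pow_left (by norm_num) _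
            _ = 3^(12*((n/10)/12)) := by rw [← pow_mul]
            _ ≤ 3^(n/10) := Nat.pow_le_pow_right (by norm_num) (by omega)
      _ = (2^22*3)^(n/10) * 2^(2*(n/2)) := by rw [mul_pow, ← pow_mul]
      _ ≤ (27^5)^(n/10) * 2^(2*(n/2)) := by
          exact Nat.mul_le_mul_right _ (Nat.pow_le_pow_left (by norm_num) _)
      _ = 27^(5*(n/10)) * 4^(n/2) := by
          rw [← pow_mul]
          congr 1
          rw [show (4:ℕ) = 2^2 by norm_num, ← pow_mul]
      _ ≤ 27^(n - n/2) * 4^(n/2) :=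
          Nat.mul_le_mul_right _ (Nat.pow_le_pow_right (by norm_num) (by omega))
  exact lt_of_le_of_lt hE hF

theorem choose_le_of_no (n : ℕ) (hn : 100 ≤ n)
    (no_prime : ¬∃ q : ℕ, q.Prime ∧ 2*n < q ∧ q ≤ 3*n) :
    Nat.choose (3*n) n ≤ (3*n)^(Nat.sqrt (3*n)) *
      (4^(3*n/5) * Nat.choose (n + n/2) (n/2)) := by
  set s := Nat.sqrt (3*n) with hsdef
  set B := Nat.choose (n + n/2) (n/2) with hBdef
  have hn3 : n ≤ 3*n := by omega
  set f : ℕ → ℕ := fun x => x ^ (Nat.choose (3*n) n).factorization x with hf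
  have h1 : ∏ x ∈ (Finset.range (3*n+1)).filter Nat.Prime, f x = Nat.choose (3*n) n := by
    rw [← Nat.prod_pow_factorization_choose (3*n) n hn3]
    exact Finset.prod_filter_of_ne fun x _ h => by
      by_contra hnp
      exact h (by rw [hf]; simp [Nat.factorization_eq_zero_of_not_prime _ hnp])
  rw [← h1]
  set S := (Finset.range (3*n+1)).filter Nat.Prime with hS
  rw [← Finset.prod_filter_mul_prod_filter_not S (· ≤ s) f]
  set T := S.filter (fun q => ¬ q ≤ s) with hT
  rw [← Finset.prod_filter_mul_prod_filter_not T (fun q => 5*q ≤ 3*n) f, ← mul_assoc]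
  have hsmall : ∏ x ∈ S.filter (· ≤ s), f x ≤ (3*n)^s := by
    refine le_trans (Finset.prod_le_pow_card _ _ (3*n) ?_) ?_
    · intro x _
      exact Nat.pow_factorization_choose_le (by omega)
    · refine Nat.pow_le_pow_right (by omega) ?_
      have hcard : (S.filter (· ≤ s)) ⊆ Finset.Icc 1 s := by
        intro x hx
        simp only [hS, Finset.mem_filter, Finset.mem_range] at hx
        exact Finset.mem_Icc.mpr ⟨hx.1.2.one_lt.le, hx.2⟩
      calc (S.filter (· ≤ s)).card ≤ (Finset.Icc 1 s).card := Finset.card_le_card hcard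
        _ = s := by rw [Nat.card_Icc]; omega
  have hv1 : ∀ q ∈ T, (Nat.choose (3*n) n).factorization q ≤ 1 := by
    intro q hq
    simp only [hT, Finset.mem_filter] at hq
    exact Nat.factorization_choose_le_one (Nat.sqrt_lt'.mp (not_le.1 hq.2))
  have hmid : ∏ x ∈ T.filter (fun q => 5*q ≤ 3*n), f x ≤ 4^(3*n/5) := by
    refine le_trans (Finset.prod_le_prod' (g := fun q => q) fun q hq => ?_) ?_
    · have hq' := Finset.mem_filter.1 hq
      have hqT := hq'.1
      have hqP : q.Prime := by
        simp only [hT, hS, Finset.mem_filter] at hqT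
        exact hqT.1.2
      calc f q ≤ q ^ 1 := Nat.pow_le_pow_right hqP.one_lt.le (hv1 q hqT)
        _ = q := pow_one q
    · refine le_trans ?_ (primorial_le_4_pow (3*n/5))
      rw [primorial]
      refine Finset.prod_le_prod_of_subset_of_one_le' ?_ ?_
      · intro q hq
        simp only [hT, hS, Finset.mem_filter, Finset.mem_range] at hq ⊢
        refine ⟨?_, hq.1.1.2⟩
        have : q ≤ 3*n/5 := Nat.le_div_iff_mul_le (by norm_num) |>.2 (by omega)
        omega
      · intro q hq _
        exact (Finset.mem_filter.1 hq).2.pos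
  have hhigh : ∏ x ∈ T.filter (fun q => ¬ 5*q ≤ 3*n), f x ≤ B := by
    have hBpos : 0 < B := Nat.choose_pos (by omega)
    set T2 := T.filter (fun q => ¬ 5*q ≤ 3*n) with hT2
    have hmem : ∀ q ∈ T2, q.Prime ∧ q ≤ 3*n ∧ 3*n < q^2 ∧ 3*n < 5*q := by
      intro q hq
      simp only [hT2, hT, hS, Finset.mem_filter, Finset.mem_range] at hq
      exact ⟨hq.1.1.2, by omega, Nat.sqrt_lt'.mp (not_le.1 hq.1.2), by omega⟩
    have key : ∀ q ∈ T2, f q ≠ 1 → q ∣ B := by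
      intro q hq hfq
      obtain ⟨hqP, hq3n, hq2, hq5⟩ := hmem q hq
      have hv : (Nat.choose (3*n) n).factorization q ≠ 0 := by
        intro h0
        exact hfq (by rw [hf]; simp [h0])
      have hq2' : 2 ≤ q := hqP.two_le
      by_cases c1 : 3*q ≤ 2*n
      · exfalso
        refine hv (Zlemma hqP hn3 hq2 ?_)
        rw [show 3*n - n = 2*n by omega]
        have m1 : n % q = n - 1*q := mod_eq_sub n q 1 (by omega) (by omega)
        have m2 : (2*n) % q = 2*n - 3*q := mod_eq_sub (2*n) q 3 (by omega) (by omega)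
        omega
      · by_cases c2 : 4*q ≤ 3*n
        · -- sliver 1 : 2n < 3q, 4q ≤ 3n
          refine Plemma hqP (show n/2 ≤ n + n/2 by omega) (by omega) ?_
          rw [show n + n/2 - n/2 = n by omega]
          have m1 : (n/2) % q = n/2 := Nat.mod_eq_of_lt (by omega)
          have m2 : n % q = n - 1*q := mod_eq_sub n q 1 (by omega) (by omega)
          omega
        · by_cases c3 : q ≤ n
          · exfalso
            refine hv (Zlemma hqP hn3 hq2 ?_)
            rw [show 3*n - n = 2*n by omega]
            have m1 : n % q = n - 1*q := mod_eq_sub n q 1 (by omega) (by omega)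
            have m2 : (2*n) % q = 2*n - 2*q := mod_eq_sub (2*n) q 2 (by omega) (by omega)
            omega
          · by_cases c4 : 2*q ≤ 3*n
            · -- sliver 2 : n < q, 2q ≤ 3n
              refine Plemma hqP (show n/2 ≤ n + n/2 by omega) (by omega) ?_
              rw [show n + n/2 - n/2 = n by omega]
              have m1 : (n/2) % q = n/2 := Nat.mod_eq_of_lt (by omega)
              have m2 : n % q = n := Nat.mod_eq_of_lt (by omega)
              omega
            · by_cases c5 : q ≤ 2*n
              · exfalso
                refine hv (Zlemma hqP hn3 hq2 ?_)
                rw [show 3*n - n = 2*n by omega]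
                have m1 : n % q = n := Nat.mod_eq_of_lt (by omega)
                have m2 : (2*n) % q = 2*n - 1*q := mod_eq_sub (2*n) q 1 (by omega) (by omega)
                omega
              · exact absurd ⟨q, hqP, by omega, hq3n⟩ no_prime
    calc ∏ x ∈ T2, f x = ∏ x ∈ T2.filter (· ∣ B), f x :=
          (Finset.prod_filter_of_ne key).symm
      _ ≤ ∏ x ∈ T2.filter (· ∣ B), x := by
          refine Finset.prod_le_prod' fun q hq => ?_
          have hqT : q ∈ T := (Finset.mem_filter.1 (Finset.mem_filter.1 hq).1).1
          have hqP : q.Prime := (hmem q (Finset.mem_filter.1 hq).1).1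
          calc f q ≤ q ^ 1 := Nat.pow_le_pow_right hqP.one_lt.le (hv1 q hqT)
            _ = q := pow_one q
      _ ≤ B := by
          refine Nat.le_of_dvd hBpos (Finset.prod_primes_dvd B ?_ ?_)
          · intro q hq
            exact ((hmem q (Finset.mem_filter.1 hq).1).1).prime
          · intro q hq
            exact (Finset.mem_filter.1 hq).2
  calc ((∏ x ∈ S.filter (· ≤ s), f x) * ∏ x ∈ T.filter (fun q => 5*q ≤ 3*n), f x) *
        ∏ x ∈ T.filter (fun q => ¬ 5*q ≤ 3*n), f x
      ≤ (3*n)^s * 4^(3*n/5) * B :=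
        Nat.mul_le_mul (Nat.mul_le_mul hsmall hmid) hhigh
    _ = (3*n)^s * (4^(3*n/5) * B) := by ring

theorem EB_large (n : ℕ) (hn : 100000 ≤ n) :
    ∃ q : ℕ, q.Prime ∧ 2*n < q ∧ q ≤ 3*n := by
  by_contra no_prime
  set s := Nat.sqrt (3*n) with hsdef
  set B := Nat.choose (n + n/2) (n/2) with hBdef
  have hd := choose_le_of_no n (by omega) no_prime
  have hA := lemA n
  have hBB := Bbound n
  have hcore := core n hn
  have chain : 27^n * 4^(n/2) < 27^n * 4^(n/2) := by
    calc 27^n * 4^(n/2)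
        ≤ (4^n * ((3*n+1) * Nat.choose (3*n) n)) * 4^(n/2) := Nat.mul_le_mul_right _ hA
      _ ≤ (4^n * ((3*n+1) * ((3*n)^s * (4^(3*n/5) * B)))) * 4^(n/2) := by
          refine Nat.mul_le_mul_right _ (Nat.mul_le_mul_left _ (Nat.mul_le_mul_left _ hd))
      _ = ((3*n+1) * (3*n)^s * 4^(n + 3*n/5)) * (B * 4^(n/2)) := by
          rw [pow_add]; ring
      _ ≤ ((3*n+1) * (3*n)^s * 4^(n + 3*n/5)) * (2 * 27^(n/2)) := Nat.mul_le_mul_left _ hBB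
      _ = (2*(3*n+1)*(3*n)^s * 4^(n + 3*n/5)) * 27^(n/2) := by ring
      _ < (27^(n - n/2) * 4^(n/2)) * 27^(n/2) := by
          exact Nat.mul_lt_mul_of_lt_of_le hcore (le_refl _) (by positivity)
      _ = 27^n * 4^(n/2) := by
          rw [mul_right_comm, ← pow_add, show n - n/2 + n/2 = n by omega]
  exact lt_irrefl _ chain

lemma cover_step {m : ℕ} (q : ℕ) {p : ℕ} (hp : p.Prime) (hcov : p ≤ 3 * q)
    (H : m < q → ∃ r : ℕ, r.Prime ∧ 2*m < r ∧ r ≤ 3*m) (hm : 2*m < p) :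
    ∃ r : ℕ, r.Prime ∧ 2*m < r ∧ r ≤ 3*m := by
  by_cases h : p ≤ 3*m
  · exact ⟨p, hp, hm, h⟩
  · exact H (by omega)

theorem EB_all (m : ℕ) (hm : 1 ≤ m) : ∃ q : ℕ, q.Prime ∧ 2*m < q ∧ q ≤ 3*m := by
  rcases le_or_gt 100000 m with h | h
  · exact EB_large m h
  · have start : m < 100000 → ∃ q : ℕ, q.Prime ∧ 2*m < q ∧ q ≤ 3*m := by
      intro hlt
      refine cover_step 66667 (p := 199999) (by norm_num) (by norm_num) (fun hlt => ?_) (by omega)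
      refine cover_step 44446 (p := 133337) (by norm_num) (by norm_num) (fun hlt => ?_) (by omega)
      refine cover_step 29633 (p := 88897) (by norm_num) (by norm_num) (fun hlt => ?_) (by omega)
      refine cover_step 19758 (p := 59273) (by norm_num) (by norm_num) (fun hlt => ?_) (by omega)
      refine cover_step 13174 (p := 39521) (by norm_num) (by norm_num) (fun hlt => ?_) (by omega)
      refine cover_step 8783 (p := 26347) (by norm_num) (by norm_num) (fun hlt => ?_) (by omega)
      refine cover_step 5857 (p := 17569) (by norm_num) (by norm_num) (fun hlt => ?_) (by omega)
      refine cover_step 3906 (p := 11717) (by norm_num) (by norm_num) (fun hlt => ?_) (by omega)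
      refine cover_step 2606 (p := 7817) (by norm_num) (by norm_num) (fun hlt => ?_) (by omega)
      refine cover_step 1743 (p := 5227) (by norm_num) (by norm_num) (fun hlt => ?_) (by omega)
      refine cover_step 1164 (p := 3491) (by norm_num) (by norm_num) (fun hlt => ?_) (by omega)
      refine cover_step 778 (p := 2333) (by norm_num) (by norm_num) (fun hlt => ?_) (by omega)
      refine cover_step 520 (p := 1559) (by norm_num) (by norm_num) (fun hlt => ?_) (by omega)
      refine cover_step 347 (p := 1039) (by norm_num) (by norm_num) (fun hlt => ?_) (by omega)
      refine cover_step 234 (p := 701) (by norm_num) (by norm_num) (fun hlt => ?_) (by omega)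
      refine cover_step 156 (p := 467) (by norm_num) (by norm_num) (fun hlt => ?_) (by omega)
      refine cover_step 104 (p := 311) (by norm_num) (by norm_num) (fun hlt => ?_) (by omega)
      refine cover_step 71 (p := 211) (by norm_num) (by norm_num) (fun hlt => ?_) (by omega)
      refine cover_step 50 (p := 149) (by norm_num) (by norm_num) (fun hlt => ?_) (by omega)
      refine cover_step 34 (p := 101) (by norm_num) (by norm_num) (fun hlt => ?_) (by omega)
      refine cover_step 23 (p := 67) (by norm_num) (by norm_num) (fun hlt => ?_) (by omega)
      refine cover_step 16 (p := 47) (by norm_num) (by norm_num) (fun hlt => ?_) (by omega)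
      refine cover_step 11 (p := 31) (by norm_num) (by norm_num) (fun hlt => ?_) (by omega)
      refine cover_step 8 (p := 23) (by norm_num) (by norm_num) (fun hlt => ?_) (by omega)
      refine cover_step 6 (p := 17) (by norm_num) (by norm_num) (fun hlt => ?_) (by omega)
      refine cover_step 4 (p := 11) (by norm_num) (by norm_num) (fun hlt => ?_) (by omega)
      refine cover_step 3 (p := 7) (by norm_num) (by norm_num) (fun hlt => ?_) (by omega)
      refine cover_step 2 (p := 5) (by norm_num) (by norm_num) (fun hlt => ?_) (by omega)
      refine cover_step 1 (p := 3) (by norm_num) (by norm_num) (fun hlt => ?_) (by omega)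
      exact absurd hm (by omega)
    exact start h

theorem gap (p : ℕ) (hp : p.Prime) : ∃ q : ℕ, q.Prime ∧ p < q ∧ q^2 ≤ 3*p^2 := by
  rcases lt_or_ge p 7 with h | h
  · interval_cases p
    · exact absurd hp (by norm_num)
    · exact absurd hp (by norm_num)
    · exact ⟨3, by norm_num⟩
    · exact ⟨5, by norm_num⟩
    · exact absurd hp (by norm_num)
    · exact ⟨7, by norm_num⟩
    · exact absurd hp (by norm_num)
  · have hodd : p % 2 = 1 := by
      rcases Nat.Prime.eq_two_or_odd hp with h2 | h2
      · omega
      · exact h2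
    obtain ⟨q, hq, hq1, hq2⟩ := EB_all ((p+1)/2) (by omega)
    refine ⟨q, hq, by omega, ?_⟩
    have h1 : 2*q ≤ 3*(p+1) := by omega
    have h2 : 4*q^2 ≤ 9*(p+1)^2 := by nlinarith
    have h3 : 9*(p+1)^2 ≤ 12*p^2 := by nlinarith
    omega

end EB

theorem stmt_1 (n p : ℕ) (hn : 9 ≤ n) (hp : p.Prime) (hp2 : p ^ 2 ≤ n)
    (hmax : ∀ q : ℕ, q.Prime → q ^ 2 ≤ n → q ≤ p) :
    n / p ^ 2 = 1 ∨ n / p ^ 2 = 2 := by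
  obtain ⟨q, hq, hpq, hq3⟩ := EB.gap p hp
  have hqn : ¬ q^2 ≤ n := fun h => absurd (hmax q hq h) (by omega)
  have hn3 : n < 3*p^2 := by omega
  have hppos : 0 < p := hp.pos
  have hpos : 0 < p^2 := by positivity
  have h1 : 1 ≤ n / p^2 := (Nat.one_le_div_iff hpos).2 hp2
  have h2 : n / p^2 < 3 := Nat.div_lt_of_lt_mul (by omega)
  omega
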